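/- Energy conservation for the multi-adaptive continuous Galerkin method: Let N ≥ 1, T > 0, and let P : ℝ^N → ℝ be continuously differentiable. For each i = 1,…,N let 0 = t_{i,0} < … < t_{i,M_i} = T be a partition of [0,T] with subintervals I_{ij} = (t_{i,j−1}, t_{ij}) and polynomial degrees q_{ij} ≥ 1. Let U, V : [0,T] → ℝ^N be continuous functions such that for every i, j the restrictions of U_i and V_i to I_{ij} are polynomials of degree ≤ q_{ij}, and suppose the Galerkin equations hold: for all i, j and all polynomials w of degree ≤ q_{ij} − 1, ∫_{I_{ij}} (U̇_i(t) − V_i(t)) w(t) dt = 0 and ∫_{I_{ij}} (V̇_i(t) + (∂P/∂x_i)(U(t))) w(t) dt = 0. Then at every synchronized time-level t̄ ∈ (0,T] (i.e. every t̄ such that for each i there is some j with t̄ = t_{ij}) the total energy is conserved: (1/2)‖V(t̄)‖² + P(U(t̄)) = (1/2)‖V(0)‖² + P(U(0)). -/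

import Mathlib

open MeasureTheory intervalIntegral Set

lemma euclid_sum_single {N : ℕ} (x : EuclideanSpace ℝ (Fin N)) :
    ∑ i, x i • EuclideanSpace.single i (1:ℝ) = x := by
  ext j
  rw [WithLp.ofLp_sum, Finset.sum_apply]
  simp [EuclideanSpace.single_apply]

lemma ae_Ioo_imp {a b : ℝ} (hab : a ≤ b) {Q : ℝ → Prop}
    (h : ∀ x ∈ Ioo a b, Q x) : ∀ᵐ x ∂(volume : Measure ℝ), x ∈ Set.uIoc a b → Q x := by
  filter_upwards [compl_mem_ae_iff.mpr (measure_singleton b)] with x hx hmem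
  rw [uIoc_of_le hab] at hmem
  exact h x ⟨hmem.1, lt_of_le_of_ne hmem.2 hx⟩

lemma integral_congr_Ioo {a b : ℝ} (hab : a ≤ b) {f g : ℝ → ℝ}
    (h : ∀ x ∈ Ioo a b, f x = g x) :
    ∫ x in a..b, f x = ∫ x in a..b, g x :=
  intervalIntegral.integral_congr_ae (ae_Ioo_imp hab h)

lemma intervalIntegrable_congr_Ioo {a b : ℝ} (hab : a ≤ b) {f g : ℝ → ℝ}
    (h : ∀ x ∈ Ioo a b, f x = g x) (hg : IntervalIntegrable g volume a b) :
    IntervalIntegrable f volume a b := by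
  rw [intervalIntegrable_iff_integrableOn_Ioo_of_le hab] at hg ⊢
  exact hg.congr ((ae_restrict_iff' measurableSet_Ioo).2
    (Filter.Eventually.of_forall fun x hx => (h x hx).symm))

lemma poly_sq_integral (r : Polynomial ℝ) (a b : ℝ) :
    ∫ s in a..b, r.eval s * r.derivative.eval s
      = (1/2) * r.eval b ^ 2 - (1/2) * r.eval a ^ 2 := by
  have hd : ∀ x ∈ uIcc a b, HasDerivAt (fun y => (1/2) * Polynomial.eval y r ^ 2)
      (Polynomial.eval x r * Polynomial.eval x r.derivative) x := by
    intro x _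
    have h := ((r.hasDerivAt x).fun_pow 2).const_mul (1/2 : ℝ)
    refine h.congr_deriv ?_
    ring
  have := intervalIntegral.integral_eq_sub_of_hasDerivAt hd
    ((r.continuous.mul r.derivative.continuous).intervalIntegrable a b)
  simpa using this

set_option maxHeartbeats 2000000 in
theorem mcG_energy_conservation
    (N : ℕ) (hN : 1 ≤ N) (T : ℝ) (hT : 0 < T)
    (P : EuclideanSpace ℝ (Fin N) → ℝ) (hP : ContDiff ℝ 1 P)
    -- the individual partitions `0 = t_{i,0} < ⋯ < t_{i,M_i} = T`
    (M : Fin N → ℕ) (hM : ∀ i, 1 ≤ M i)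
    (t : Fin N → ℕ → ℝ)
    (ht0 : ∀ i, t i 0 = 0) (htT : ∀ i, t i (M i) = T)
    (htmono : ∀ i, ∀ j < M i, t i j < t i (j + 1))
    -- the polynomial degrees `q_{ij} ≥ 1`
    (q : Fin N → ℕ → ℕ) (hq : ∀ i, ∀ j < M i, 1 ≤ q i j)
    -- `U` (positions) and `V` (velocities) are continuous piecewise polynomials
    (U V : ℝ → EuclideanSpace ℝ (Fin N))
    (hUc : ContinuousOn U (Set.Icc 0 T)) (hVc : ContinuousOn V (Set.Icc 0 T))
    (hUpoly : ∀ i, ∀ j < M i, ∃ p : Polynomial ℝ, p.natDegree ≤ q i j ∧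
      ∀ s ∈ Set.Icc (t i j) (t i (j + 1)), U s i = p.eval s)
    (hVpoly : ∀ i, ∀ j < M i, ∃ p : Polynomial ℝ, p.natDegree ≤ q i j ∧
      ∀ s ∈ Set.Icc (t i j) (t i (j + 1)), V s i = p.eval s)
    -- the Galerkin equations for `U̇ = V` and `V̇ = −∇P(U)`
    (hGalU : ∀ i, ∀ j < M i, ∀ w : Polynomial ℝ, w.natDegree ≤ q i j - 1 →
      ∫ s in (t i j)..(t i (j + 1)),
        (deriv (fun r => U r i) s - V s i) * w.eval s = 0)
    (hGalV : ∀ i, ∀ j < M i, ∀ w : Polynomial ℝ, w.natDegree ≤ q i j - 1 →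
      ∫ s in (t i j)..(t i (j + 1)),
        (deriv (fun r => V r i) s
          + fderiv ℝ P (U s) (EuclideanSpace.single i 1)) * w.eval s = 0)
    -- a synchronized time-level `t̄ ∈ (0,T]`
    (tbar : ℝ) (htbar : tbar ∈ Set.Ioc 0 T)
    (hsync : ∀ i, ∃ j, 1 ≤ j ∧ j ≤ M i ∧ tbar = t i j) :
    (1 / 2) * ‖V tbar‖ ^ 2 + P (U tbar) = (1 / 2) * ‖V 0‖ ^ 2 + P (U 0) := by
  obtain ⟨htbar0, htbarT⟩ := htbar
  set F : Fin N → ℝ → ℝ := fun i s =>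
    fderiv ℝ P (U s) (EuclideanSpace.single i 1) * deriv (fun r => U r i) s with hF
  -- monotonicity of the partitions
  have tmono : ∀ i, ∀ k, k ≤ M i → ∀ j, j ≤ k → t i j ≤ t i k := by
    intro i k
    induction k with
    | zero => intro _ j hj; rw [Nat.le_zero.mp hj]
    | succ n ih =>
      intro hk j hj
      rcases Nat.eq_or_lt_of_le hj with h | h
      · rw [h]
      · exact (ih (by omega) j (by omega)).trans (htmono i n (by omega)).le
  have trange : ∀ i, ∀ j, j ≤ M i → t i j ∈ Icc (0:ℝ) T := by
    intro i j hj
    constructor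
    · rw [← ht0 i]; exact tmono i j hj 0 (Nat.zero_le j)
    · rw [← htT i]; exact tmono i (M i) le_rfl j hj
  -- continuity of the partial derivative of P along U
  have gcont : ∀ i, ContinuousOn
      (fun s => fderiv ℝ P (U s) (EuclideanSpace.single i (1:ℝ))) (Icc (0:ℝ) T) := by
    intro i
    exact ((ContinuousLinearMap.apply ℝ ℝ (EuclideanSpace.single i (1:ℝ))).continuous.comp
      (hP.continuous_fderiv one_ne_zero)).comp_continuousOn hUc
  -- the key per-interval identity
  have key : ∀ i, ∀ j, j < M i →
      IntervalIntegrable (F i) volume (t i j) (t i (j+1)) ∧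
      (1/2) * (V (t i (j+1)) i)^2 - (1/2) * (V (t i j) i)^2
        + ∫ s in (t i j)..(t i (j+1)), F i s = 0 := by
    intro i j hj
    obtain ⟨p, hpdeg, hpU⟩ := hUpoly i j hj
    obtain ⟨r, hrdeg, hrV⟩ := hVpoly i j hj
    have hab : t i j < t i (j+1) := htmono i j hj
    have hsub : Icc (t i j) (t i (j+1)) ⊆ Icc 0 T :=
      Icc_subset_Icc (trange i j hj.le).1 (trange i (j+1) hj).2
    have hUd : ∀ x ∈ Ioo (t i j) (t i (j+1)),
        deriv (fun r => U r i) x = p.derivative.eval x := by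
      intro x hx
      have hev : (fun s => U s i) =ᶠ[nhds x] (fun s => p.eval s) :=
        Filter.eventuallyEq_of_mem (isOpen_Ioo.mem_nhds hx)
          (fun s hs => hpU s (Ioo_subset_Icc_self hs))
      rw [hev.deriv_eq, Polynomial.deriv]
    have hVd : ∀ x ∈ Ioo (t i j) (t i (j+1)),
        deriv (fun s => V s i) x = r.derivative.eval x := by
      intro x hx
      have hev : (fun s => V s i) =ᶠ[nhds x] (fun s => r.eval s) :=
        Filter.eventuallyEq_of_mem (isOpen_Ioo.mem_nhds hx)
          (fun s hs => hrV s (Ioo_subset_Icc_self hs))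
      rw [hev.deriv_eq, Polynomial.deriv]
    have h1 : IntervalIntegrable (fun s => p.derivative.eval s * r.derivative.eval s)
        volume (t i j) (t i (j+1)) :=
      (p.derivative.continuous.mul r.derivative.continuous).intervalIntegrable _ _
    have h2 : IntervalIntegrable (fun s => r.eval s * r.derivative.eval s)
        volume (t i j) (t i (j+1)) :=
      (r.continuous.mul r.derivative.continuous).intervalIntegrable _ _
    have gc : ContinuousOn (fun s => fderiv ℝ P (U s) (EuclideanSpace.single i (1:ℝ)))
        (uIcc (t i j) (t i (j+1))) := by
      rw [uIcc_of_le hab.le]; exact (gcont i).mono hsub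
    have int_gp : IntervalIntegrable
        (fun s => fderiv ℝ P (U s) (EuclideanSpace.single i (1:ℝ)) * p.derivative.eval s)
        volume (t i j) (t i (j+1)) :=
      (gc.mul p.derivative.continuous.continuousOn).intervalIntegrable
    -- Galerkin equation for U with test function r'
    have hdegr : r.derivative.natDegree ≤ q i j - 1 :=
      le_trans (Polynomial.natDegree_derivative_le r) (Nat.sub_le_sub_right hrdeg 1)
    have hA0 := hGalU i j hj r.derivative hdegr
    have hA : ∫ s in (t i j)..(t i (j+1)),
        (p.derivative.eval s * r.derivative.eval s - r.eval s * r.derivative.eval s) = 0 := by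
      rw [← hA0]
      refine (integral_congr_Ioo hab.le (fun x hx => ?_)).symm
      rw [hUd x hx, hrV x (Ioo_subset_Icc_self hx)]; ring
    rw [intervalIntegral.integral_sub h1 h2] at hA
    -- Galerkin equation for V with test function p'
    have hdegp : p.derivative.natDegree ≤ q i j - 1 :=
      le_trans (Polynomial.natDegree_derivative_le p) (Nat.sub_le_sub_right hpdeg 1)
    have hB0 := hGalV i j hj p.derivative hdegp
    have hB : ∫ s in (t i j)..(t i (j+1)),
        (p.derivative.eval s * r.derivative.eval s
         + fderiv ℝ P (U s) (EuclideanSpace.single i (1:ℝ)) * p.derivative.eval s) = 0 := by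
      rw [← hB0]
      refine (integral_congr_Ioo hab.le (fun x hx => ?_)).symm
      rw [hVd x hx]; ring
    rw [intervalIntegral.integral_add h1 int_gp] at hB
    have hsq := poly_sq_integral r (t i j) (t i (j+1))
    have hVb : V (t i (j+1)) i = r.eval (t i (j+1)) :=
      hrV _ (right_mem_Icc.mpr hab.le)
    have hVa : V (t i j) i = r.eval (t i j) := hrV _ (left_mem_Icc.mpr hab.le)
    have hFeq : ∫ s in (t i j)..(t i (j+1)), F i s
        = ∫ s in (t i j)..(t i (j+1)),
            fderiv ℝ P (U s) (EuclideanSpace.single i (1:ℝ)) * p.derivative.eval s := by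
      refine integral_congr_Ioo hab.le (fun x hx => ?_)
      simp only [hF]
      rw [hUd x hx]
    refine ⟨intervalIntegrable_congr_Ioo hab.le
      (fun x hx => by simp only [hF]; rw [hUd x hx]) int_gp, ?_⟩
    rw [hFeq, hVa, hVb]
    linarith [hA, hB, hsq]
  -- accumulate over each component's partition
  have cumul : ∀ i, ∀ k, k ≤ M i →
      IntervalIntegrable (F i) volume 0 (t i k) ∧
      (1/2) * (V (t i k) i)^2 - (1/2) * (V 0 i)^2
        + ∫ s in (0:ℝ)..(t i k), F i s = 0 := by
    intro i k
    induction k with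
    | zero =>
      intro _
      rw [ht0 i]
      exact ⟨IntervalIntegrable.refl, by simp⟩
    | succ n ih =>
      intro hk
      have hn := ih (by omega)
      have hkey := key i n (by omega)
      refine ⟨hn.1.trans hkey.1, ?_⟩
      rw [← intervalIntegral.integral_add_adjacent_intervals hn.1 hkey.1]
      linarith [hn.2, hkey.2]
  have sumi : ∀ i, IntervalIntegrable (F i) volume 0 tbar ∧
      (1/2)*(V tbar i)^2 - (1/2)*(V 0 i)^2 + ∫ s in (0:ℝ)..tbar, F i s = 0 := by
    intro i
    obtain ⟨j, hj1, hjM, hjt⟩ := hsync i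
    rw [hjt]
    exact cumul i j hjM
  -- fundamental theorem of calculus for P ∘ U off the countable set of nodes
  have hScount : (⋃ i, range (t i)).Countable :=
    Set.countable_iUnion fun i => Set.countable_range _
  have locate : ∀ x ∈ Ioo (0:ℝ) tbar, x ∉ (⋃ i, range (t i)) →
      ∀ i, ∃ j, j < M i ∧ x ∈ Ioo (t i j) (t i (j+1)) := by
    intro x hx hxS i
    have hxr : x ∉ range (t i) := fun h => hxS (Set.mem_iUnion.2 ⟨i, h⟩)
    classical
    set j := Nat.findGreatest (fun j => t i j < x) (M i) with hj
    have h0 : t i 0 < x := by rw [ht0]; exact hx.1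
    have hspec : t i j < x := Nat.findGreatest_spec (P := fun j => t i j < x) (Nat.zero_le (M i)) h0
    have hjle : j ≤ M i := Nat.findGreatest_le _
    have hjlt : j < M i := by
      rcases Nat.eq_or_lt_of_le hjle with h | h
      · exfalso
        rw [h, htT i] at hspec
        exact absurd (hx.2.trans_le htbarT) (not_lt.mpr hspec.le)
      · exact h
    have hng : ¬ (t i (j+1) < x) :=
      Nat.findGreatest_is_greatest (Nat.lt_succ_self j) (by omega)
    have hne : x ≠ t i (j+1) := fun h => hxr ⟨j+1, h.symm⟩
    exact ⟨j, hjlt, hspec, lt_of_le_of_ne (not_lt.mp hng) hne⟩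
  have hderiv : ∀ x ∈ Ioo (0:ℝ) tbar \ (⋃ i, range (t i)),
      HasDerivAt (fun s => P (U s)) (∑ i, F i x) x := by
    intro x hx
    obtain ⟨hx1, hx2⟩ := hx
    have hcomp : ∀ i, HasDerivAt (fun s => U s i) (deriv (fun r => U r i) x) x := by
      intro i
      obtain ⟨j, hj, hxij⟩ := locate x hx1 hx2 i
      obtain ⟨p, hpdeg, hpU⟩ := hUpoly i j hj
      have hev : (fun s => U s i) =ᶠ[nhds x] (fun s => p.eval s) :=
        Filter.eventuallyEq_of_mem (isOpen_Ioo.mem_nhds hxij)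
          (fun s hs => hpU s (Ioo_subset_Icc_self hs))
      have hD : HasDerivAt (fun s => U s i) (p.derivative.eval x) x :=
        (p.hasDerivAt x).congr_of_eventuallyEq hev
      exact hD.differentiableAt.hasDerivAt
    have hpi : HasDerivAt (fun s => (fun i => U s i))
        (fun i => deriv (fun r => U r i) x) x := hasDerivAt_pi.2 hcomp
    have hU' : HasDerivAt U
        ((EuclideanSpace.equiv (Fin N) ℝ).symm (fun i => deriv (fun r => U r i) x)) x := by
      have := ((EuclideanSpace.equiv (Fin N) ℝ).symm.toContinuousLinearMap.hasFDerivAt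
        (x := (fun i => U x i))).comp_hasDerivAt x hpi
      exact this
    have hPU := (hP.differentiable one_ne_zero (U x)).hasFDerivAt.comp_hasDerivAt x hU'
    have heq : fderiv ℝ P (U x)
        ((EuclideanSpace.equiv (Fin N) ℝ).symm (fun i => deriv (fun r => U r i) x))
        = ∑ i, F i x := by
      rw [← euclid_sum_single ((EuclideanSpace.equiv (Fin N) ℝ).symm
        (fun i => deriv (fun r => U r i) x))]
      rw [map_sum]
      refine Finset.sum_congr rfl (fun i _ => ?_)
      simp only [hF]
      rw [ContinuousLinearMap.map_smul, smul_eq_mul]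
      exact mul_comm _ _
    rw [heq] at hPU
    exact hPU
  have hcont : ContinuousOn (fun s => P (U s)) (Icc (0:ℝ) tbar) :=
    hP.continuous.comp_continuousOn (hUc.mono (Icc_subset_Icc le_rfl htbarT))
  have hFi_int : IntervalIntegrable (fun s => ∑ i, F i s) volume 0 tbar := by
    have h := IntervalIntegrable.sum (μ := volume) (a := (0:ℝ)) (b := tbar)
      Finset.univ (fun i _ => (sumi i).1)
    have heq : (∑ i, F i) = fun s => ∑ i, F i s :=
      funext fun s => Finset.sum_apply s Finset.univ F
    rwa [heq] at h
  have hFTC : ∫ s in (0:ℝ)..tbar, (∑ i, F i s) = P (U tbar) - P (U 0) :=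
    MeasureTheory.integral_eq_of_hasDerivAt_off_countable_of_le
      (fun s => P (U s)) (fun s => ∑ i, F i s) htbar0.le hScount hcont hderiv hFi_int
  have hsum : ∫ s in (0:ℝ)..tbar, (∑ i, F i s) = ∑ i, ∫ s in (0:ℝ)..tbar, F i s :=
    intervalIntegral.integral_finset_sum (fun i _ => (sumi i).1)
  have hsumzero : ∑ i, ((1/2)*(V tbar i)^2 - (1/2)*(V 0 i)^2
      + ∫ s in (0:ℝ)..tbar, F i s) = 0 :=
    Finset.sum_eq_zero (fun i _ => (sumi i).2)
  have hnorm : ∀ y : EuclideanSpace ℝ (Fin N), ‖y‖^2 = ∑ i, (y i)^2 := by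
    intro y
    rw [EuclideanSpace.norm_eq,
      Real.sq_sqrt (Finset.sum_nonneg fun i _ => sq_nonneg _)]
    simp [sq_abs]
  rw [hnorm, hnorm]
  rw [Finset.sum_add_distrib, Finset.sum_sub_distrib, ← Finset.mul_sum, ← Finset.mul_sum]
    at hsumzero
  linarith [hsumzero, hFTC, hsum]
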